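/- arXiv:2512.23807 — 2 statements merged into one kernel-verified Lean document; each statement's English description precedes it below -/
import Mathlib

section
/- Suppose (μ_j)_{j∈ℕ} is a sequence of positive reals and there exist constants c₁, c₂ > 0 and d ∈ {1,2,3} such that c₁·j^{2/d} ≤ μ_j ≤ c₂·j^{2/d} for all sufficiently large j. Then the series ∑_{j=1}^∞ μ_j^{−d/2−1}·(T³μ_j/6 + (T²√μ_j/4)·sin(2T√μ_j) − sin(2T√μ_j)/(8√μ_j) − (T/4)·cos(2T√μ_j) + T/2) diverges to infinity for every T > 0. -/
open Filter

theorem stmt_5 (T : ℝ) (hT : 0 < T) (d : ℕ) (hd : d = 1 ∨ d = 2 ∨ d = 3)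
    (μ : ℕ → ℝ) (hμ : ∀ j, 0 < μ j)
    (c₁ c₂ : ℝ) (hc₁ : 0 < c₁) (hc₂ : 0 < c₂)
    (hW : ∀ᶠ j : ℕ in atTop,
      c₁ * (j : ℝ) ^ ((2:ℝ)/d) ≤ μ j ∧ μ j ≤ c₂ * (j : ℝ) ^ ((2:ℝ)/d)) :
    Tendsto (fun n : ℕ => ∑ j ∈ Finset.Icc 1 n,
        (μ j) ^ (-(d:ℝ)/2 - 1) *
          (T ^ 3 * μ j / 6
            + T ^ 2 * Real.sqrt (μ j) / 4 * Real.sin (2 * T * Real.sqrt (μ j))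
            - Real.sin (2 * T * Real.sqrt (μ j)) / (8 * Real.sqrt (μ j))
            - T / 4 * Real.cos (2 * T * Real.sqrt (μ j))
            + T / 2)) atTop atTop := by
  have hd0 : (0:ℝ) < d := by rcases hd with h|h|h <;> simp [h]
  have hdne : (d:ℝ) ≠ 0 := ne_of_gt hd0
  set f : ℕ → ℝ := fun j =>
        (μ j) ^ (-(d:ℝ)/2 - 1) *
          (T ^ 3 * μ j / 6
            + T ^ 2 * Real.sqrt (μ j) / 4 * Real.sin (2 * T * Real.sqrt (μ j))
            - Real.sin (2 * T * Real.sqrt (μ j)) / (8 * Real.sqrt (μ j))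
            - T / 4 * Real.cos (2 * T * Real.sqrt (μ j))
            + T / 2) with hf
  set M : ℝ := 1 + 36 / T ^ 2 + 3 / T ^ 3 with hM
  -- μ tends to infinity
  have hμtop : Tendsto μ atTop atTop := by
    have h1 : Tendsto (fun j : ℕ => c₁ * (j:ℝ) ^ ((2:ℝ)/d)) atTop atTop := by
      apply Tendsto.const_mul_atTop hc₁
      exact (tendsto_rpow_atTop (by positivity)).comp tendsto_natCast_atTop_atTop
    exact tendsto_atTop_mono' atTop (hW.mono fun j hj => hj.1) h1
  set K : ℝ := T ^ 3 / 12 * c₂ ^ (-(d:ℝ)/2) with hK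
  have hKpos : 0 < K := by
    have : (0:ℝ) < c₂ ^ (-(d:ℝ)/2) := Real.rpow_pos_of_pos hc₂ _
    positivity
  -- key pointwise bound
  have key : ∀ᶠ j : ℕ in atTop, K / j ≤ f j := by
    filter_upwards [hW, hμtop.eventually_ge_atTop M, eventually_ge_atTop 1]
      with j hWj hMj hj1
    have hμj := hμ j
    set s := Real.sqrt (μ j) with hs
    have hs2 : s ^ 2 = μ j := Real.sq_sqrt hμj.le
    have hspos : 0 < s := Real.sqrt_pos.mpr hμj
    have h36 : (0:ℝ) < 36 / T ^ 2 := by positivity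
    have h3' : (0:ℝ) < 3 / T ^ 3 := by positivity
    have hMj' : 1 + 36 / T ^ 2 + 3 / T ^ 3 ≤ μ j := hMj
    have hs1 : 1 ≤ s := by nlinarith
    have hTμ : 36 ≤ T ^ 2 * μ j := by
      have h : 36 / T ^ 2 ≤ μ j := by linarith
      calc (36:ℝ) = T ^ 2 * (36 / T ^ 2) := by field_simp
        _ ≤ T ^ 2 * μ j := by
          exact mul_le_mul_of_nonneg_left h (by positivity)
    have hTs : 6 ≤ T * s := by nlinarith [mul_pos hT hspos]
    have hT3 : 3 ≤ T ^ 3 * μ j := by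
      have h : 3 / T ^ 3 ≤ μ j := by linarith
      calc (3:ℝ) = T ^ 3 * (3 / T ^ 3) := by field_simp
        _ ≤ T ^ 3 * μ j := mul_le_mul_of_nonneg_left h (by positivity)
    have hsin := Real.neg_one_le_sin (2 * T * s)
    have hsin' := Real.sin_le_one (2 * T * s)
    have hcos := Real.cos_le_one (2 * T * s)
    have hdivle : Real.sin (2 * T * s) / (8 * s) ≤ 1 / 8 := by
      rw [div_le_iff₀ (by positivity)]
      nlinarith
    -- inner expression bound
    have hE : T ^ 3 * μ j / 12 ≤
        T ^ 3 * μ j / 6 + T ^ 2 * s / 4 * Real.sin (2 * T * s)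
          - Real.sin (2 * T * s) / (8 * s) - T / 4 * Real.cos (2 * T * s) + T / 2 := by
      nlinarith [mul_nonneg (by positivity : (0:ℝ) ≤ T ^ 2 * s / 4)
          (by linarith : (0:ℝ) ≤ Real.sin (2*T*s) + 1),
        mul_nonneg (by positivity : (0:ℝ) ≤ T / 4)
          (by linarith : (0:ℝ) ≤ 1 - Real.cos (2*T*s)),
        mul_nonneg (by positivity : (0:ℝ) ≤ T ^ 2 * s) (by linarith : (0:ℝ) ≤ T * s - 6)]
    have hrpos : 0 < (μ j) ^ (-(d:ℝ)/2 - 1) := Real.rpow_pos_of_pos hμj _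
    have step1 : T ^ 3 / 12 * (μ j) ^ (-(d:ℝ)/2) ≤ f j := by
      have := mul_le_mul_of_nonneg_left hE hrpos.le
      calc T ^ 3 / 12 * (μ j) ^ (-(d:ℝ)/2)
          = (μ j) ^ (-(d:ℝ)/2 - 1) * (T ^ 3 * μ j / 12) := by
            rw [show (-(d:ℝ)/2) = (-(d:ℝ)/2 - 1) + 1 by ring,
              Real.rpow_add_one hμj.ne']
            ring
        _ ≤ f j := this
    have hjpos : (0:ℝ) < j := by exact_mod_cast hj1
    have step2 : c₂ ^ (-(d:ℝ)/2) / j ≤ (μ j) ^ (-(d:ℝ)/2) := by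
      have h1 : (μ j) ^ (-(d:ℝ)/2) ≥ (c₂ * (j:ℝ) ^ ((2:ℝ)/d)) ^ (-(d:ℝ)/2) :=
        Real.rpow_le_rpow_of_nonpos hμj hWj.2 (by linarith)
      have h2 : (c₂ * (j:ℝ) ^ ((2:ℝ)/d)) ^ (-(d:ℝ)/2)
          = c₂ ^ (-(d:ℝ)/2) / j := by
        rw [Real.mul_rpow hc₂.le (by positivity), ← Real.rpow_mul (Nat.cast_nonneg j),
          show (2:ℝ)/d * (-(d:ℝ)/2) = -1 by field_simp, Real.rpow_neg_one]
        ring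
      rw [← h2]; exact h1
    calc K / j = T ^ 3 / 12 * (c₂ ^ (-(d:ℝ)/2) / j) := by rw [hK]; ring
      _ ≤ T ^ 3 / 12 * (μ j) ^ (-(d:ℝ)/2) := by
          apply mul_le_mul_of_nonneg_left step2 (by positivity)
      _ ≤ f j := step1
  -- extract threshold
  obtain ⟨N₀, hN₀⟩ := eventually_atTop.mp key
  set N := max N₀ 1 with hNdef
  have hN1 : 1 ≤ N := le_max_right _ _
  have hN : ∀ j, N ≤ j → K / j ≤ f j := fun j hj => hN₀ j (le_trans (le_max_left _ _) hj)
  -- harmonic divergence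
  have hHarm : Tendsto (fun n : ℕ => ∑ j ∈ Finset.Ico 1 (n+1), K / (j:ℝ)) atTop atTop := by
    have h0 := Real.tendsto_sum_range_one_div_nat_succ_atTop
    have h1 : Tendsto (fun n : ℕ => K * ∑ i ∈ Finset.range n, 1 / ((i:ℝ)+1)) atTop atTop :=
      h0.const_mul_atTop hKpos
    apply h1.congr
    intro n
    rw [Finset.mul_sum, Finset.sum_Ico_eq_sum_range]
    simp only [add_tsub_cancel_right]
    apply Finset.sum_congr rfl
    intro i _
    push_cast
    rw [mul_one_div]
    ring_nf
  -- tail divergence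
  have hTail : Tendsto (fun n : ℕ => ∑ j ∈ Finset.Ico N (n+1), K / (j:ℝ)) atTop atTop := by
    have h2 : Tendsto (fun n : ℕ =>
        (∑ j ∈ Finset.Ico 1 (n+1), K / (j:ℝ)) - ∑ j ∈ Finset.Ico 1 N, K / (j:ℝ)) atTop atTop :=
      hHarm.atTop_add tendsto_const_nhds
    apply h2.congr'
    filter_upwards [eventually_ge_atTop N] with n hn
    rw [← Finset.sum_Ico_consecutive _ hN1 (by omega : N ≤ n + 1)]
    ring
  set C : ℝ := ∑ j ∈ Finset.Ico 1 N, f j with hC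
  have hfinal : Tendsto (fun n : ℕ => C + ∑ j ∈ Finset.Ico N (n+1), K / (j:ℝ)) atTop atTop :=
    tendsto_atTop_add_const_left _ _ hTail
  apply tendsto_atTop_mono' atTop _ hfinal
  filter_upwards [eventually_ge_atTop N] with n hn
  have hsplit : ∑ j ∈ Finset.Icc 1 n, f j
      = C + ∑ j ∈ Finset.Ico N (n+1), f j := by
    rw [hC, ← Finset.Ico_add_one_right_eq_Icc,
      ← Finset.sum_Ico_consecutive _ hN1 (by omega : N ≤ n + 1)]
  calc C + ∑ j ∈ Finset.Ico N (n+1), K / (j:ℝ)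
      ≤ C + ∑ j ∈ Finset.Ico N (n+1), f j := by
        gcongr with j hj
        exact hN j (Finset.mem_Ico.mp hj).1
    _ = ∑ j ∈ Finset.Icc 1 n, f j := hsplit.symm
end

section
/- Let Ω = (0,π) ⊂ ℝ (so d = 1, μ_j = j², φ_j(x) = √(2/π)·sin(j x)) and T > 0. Define u(x,t) = ∑_{j=1}^∞ φ_j(x)·j^{−3/2}·∫₀ᵗ s·sin(j s) ds. Then the series ∑_{j=1}^∞ j^{−3}·∫₀ᵀ (∂_{tt}∫₀ᵗ s·sin(j s) ds)² dt = ∑_{j=1}^∞ j^{−3}·∫₀ᵀ (sin(j t) + j t cos(j t))² dt diverges. -/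
set_option maxHeartbeats 800000

private lemma antideriv15 (c : ℝ) (hc : c ≠ 0) (t : ℝ) :
    HasDerivAt (fun t : ℝ => t^3/6 + t^2 * Real.sin (2*(c*t))/(4*c)
      + t * Real.cos (2*(c*t))/(4*c^2) - Real.sin (2*(c*t))/(8*c^3))
      (t^2 * Real.cos (c*t)^2) t := by
  have hlin : HasDerivAt (fun x : ℝ => 2*(c*x)) (2*c) t := by
    simpa [mul_assoc] using (hasDerivAt_id t).const_mul (2*c)
  have hs : HasDerivAt (fun x : ℝ => Real.sin (2*(c*x))) (Real.cos (2*(c*t)) * (2*c)) t :=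
    by have := (Real.hasDerivAt_sin (2*(c*t))).comp t hlin; exact this
  have hco : HasDerivAt (fun x : ℝ => Real.cos (2*(c*x))) (-Real.sin (2*(c*t)) * (2*c)) t :=
    by have := (Real.hasDerivAt_cos (2*(c*t))).comp t hlin; exact this
  have h1 := (hasDerivAt_pow 3 t).div_const 6
  have h2 := ((hasDerivAt_pow 2 t).mul hs).div_const (4*c)
  have h3 := ((hasDerivAt_id t).mul hco).div_const (4*c^2)
  have h4 := hs.div_const (8*c^3)
  have H := ((h1.add h2).add h3).sub h4
  convert H using 1
  · rfl
  · rfl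
  · rfl
  rw [Real.cos_sq, id_eq]
  field_simp
  ring

private lemma int_cos_sq15 (c : ℝ) (hc : c ≠ 0) (T : ℝ) :
    ∫ t in (0:ℝ)..T, t^2 * Real.cos (c*t)^2
      = T^3/6 + T^2 * Real.sin (2*(c*T))/(4*c)
        + T * Real.cos (2*(c*T))/(4*c^2) - Real.sin (2*(c*T))/(8*c^3) := by
  rw [intervalIntegral.integral_eq_sub_of_hasDerivAt (f' := fun t => t^2 * Real.cos (c*t)^2)
    (fun t _ => antideriv15 c hc t)
    (by apply Continuous.intervalIntegrable; fun_prop)]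
  simp

private lemma term_lb15 (T : ℝ) (hT : 0 < T) (j : ℕ) (hj : 1 ≤ j) :
    T^3/12 * (1/(j:ℝ)) ≤ (j : ℝ) ^ (-(3:ℝ)) *
        (∫ t in (0:ℝ)..T, (Real.sin (j * t) + (j:ℝ) * t * Real.cos (j * t)) ^ 2)
      + (T^2/8 + 9*T/8 + 1/16) * (1/(j:ℝ)^2) := by
  set c : ℝ := (j : ℝ) with hcdef
  have hc1 : (1:ℝ) ≤ c := by rw [hcdef]; exact_mod_cast hj
  have hc0 : (0:ℝ) < c := lt_of_lt_of_le one_pos hc1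
  -- integral lower bound
  have int1 : IntervalIntegrable (fun t : ℝ => c^2/2 * (t^2*Real.cos (c*t)^2) - 1)
      MeasureTheory.volume 0 T := (by apply Continuous.intervalIntegrable; fun_prop)
  have int2 : IntervalIntegrable
      (fun t : ℝ => (Real.sin (c*t) + c*t*Real.cos (c*t))^2)
      MeasureTheory.volume 0 T := (by apply Continuous.intervalIntegrable; fun_prop)
  have hmono : (∫ t in (0:ℝ)..T, (c^2/2 * (t^2*Real.cos (c*t)^2) - 1))
      ≤ ∫ t in (0:ℝ)..T, (Real.sin (c*t) + c*t*Real.cos (c*t))^2 := by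
    apply intervalIntegral.integral_mono_on hT.le int1 int2
    intro t _
    nlinarith [sq_nonneg (c*t*Real.cos (c*t) + 2*Real.sin (c*t)),
      Real.sin_sq_le_one (c*t)]
  have heval : (∫ t in (0:ℝ)..T, (c^2/2 * (t^2*Real.cos (c*t)^2) - 1))
      = c^2/2 * (T^3/6 + T^2 * Real.sin (2*(c*T))/(4*c)
        + T * Real.cos (2*(c*T))/(4*c^2) - Real.sin (2*(c*T))/(8*c^3)) - T := by
    rw [intervalIntegral.integral_sub (by apply Continuous.intervalIntegrable; fun_prop)
        (by apply Continuous.intervalIntegrable; fun_prop),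
      intervalIntegral.integral_const_mul, int_cos_sq15 c hc0.ne' T]
    simp
  set s := Real.sin (2*(c*T)) with hsdef
  set co := Real.cos (2*(c*T)) with hcodef
  have e : c^2/2 * (T^3/6 + T^2 * s/(4*c) + T * co/(4*c^2) - s/(8*c^3)) - T
      = c^2*T^3/12 + c*T^2*s/8 + T*co/8 - s/(16*c) - T := by
    field_simp
    ring
  have hs1 : s ≤ 1 := Real.sin_le_one _
  have hs2 : -1 ≤ s := Real.neg_one_le_sin _
  have hco2 : -1 ≤ co := Real.neg_one_le_cos _
  have hsc : s/(16*c) ≤ 1/16 := by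
    rw [div_le_iff₀ (by positivity)]
    nlinarith
  have i1 : -(c*T^2)/8 ≤ c*T^2*s/8 := by nlinarith [mul_nonneg hc0.le (sq_nonneg T)]
  have i2 : -T/8 ≤ T*co/8 := by nlinarith
  have key : c^2*T^3/12 - c*T^2/8 - T/8 - 1/16 - T
      ≤ ∫ t in (0:ℝ)..T, (Real.sin (c*t) + c*t*Real.cos (c*t))^2 := by
    rw [heval, e] at hmono
    linarith
  -- rpow
  have hr : c ^ (-(3:ℝ)) = (c^3)⁻¹ := by
    rw [Real.rpow_neg hc0.le, show (3:ℝ) = ((3:ℕ):ℝ) by norm_num, Real.rpow_natCast]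
  have hmul := mul_le_mul_of_nonneg_left key (inv_nonneg.mpr (pow_nonneg hc0.le 3))
  have e2 : (c^3)⁻¹ * (c^2*T^3/12 - c*T^2/8 - T/8 - 1/16 - T)
      = T^3/12*(1/c) - T^2/8*(1/c^2) - (9*T/8 + 1/16)*(1/c^3) := by
    field_simp
    ring
  have h23 : (1:ℝ)/c^3 ≤ 1/c^2 := by
    apply one_div_le_one_div_of_le (by positivity)
    nlinarith
  have h23' : (9*T/8 + 1/16)*(1/c^3) ≤ (9*T/8 + 1/16)*(1/c^2) :=
    mul_le_mul_of_nonneg_left h23 (by positivity)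
  rw [hr]
  rw [e2] at hmul
  have hx : (T^2/8 + 9*T/8 + 1/16) * (1/c^2)
      = T^2/8*(1/c^2) + (9*T/8 + 1/16)*(1/c^2) := by ring
  rw [hx]
  linarith

theorem stmt_15 (T : ℝ) (hT : 0 < T) :
    ¬ Summable (fun j : ℕ =>
        (j : ℝ) ^ (-(3:ℝ)) *
          ∫ t in (0:ℝ)..T,
            (Real.sin (j * t) + (j : ℝ) * t * Real.cos (j * t)) ^ 2) := by
  intro h
  set D : ℝ := T^2/8 + 9*T/8 + 1/16 with hD
  have h2 : Summable (fun j : ℕ =>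
      ((j : ℝ) ^ (-(3:ℝ)) *
          ∫ t in (0:ℝ)..T,
            (Real.sin (j * t) + (j : ℝ) * t * Real.cos (j * t)) ^ 2)
        + D * (1/(j:ℝ)^2)) :=
    h.add ((Real.summable_one_div_nat_pow.mpr one_lt_two).mul_left D)
  have hle : ∀ j : ℕ, T^3/12 * (1/(j:ℝ)) ≤
      ((j : ℝ) ^ (-(3:ℝ)) *
          ∫ t in (0:ℝ)..T,
            (Real.sin (j * t) + (j : ℝ) * t * Real.cos (j * t)) ^ 2)
        + D * (1/(j:ℝ)^2) := by
    intro j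
    rcases Nat.eq_zero_or_pos j with rfl | hj
    · simp [Real.zero_rpow (by norm_num : (-(3:ℝ)) ≠ 0)]
    · exact term_lb15 T hT j hj
  have hsum1 : Summable (fun j : ℕ => T^3/12 * (1/(j:ℝ))) :=
    Summable.of_nonneg_of_le (fun j => by positivity) hle h2
  have h12 : (T^3/12 : ℝ) ≠ 0 := by positivity
  have hfin : Summable (fun j : ℕ => 1/(j:ℝ)) := by
    refine (hsum1.mul_left (T^3/12)⁻¹).congr fun j => ?_
    rw [← mul_assoc, inv_mul_cancel₀ h12, one_mul]
  exact Real.not_summable_one_div_natCast hfin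
end
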